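/- arXiv:1111.4381 — 3 statements merged into one kernel-verified Lean document; each statement's English description precedes it below -/
import Mathlib

section
/- Let D = (-1,1), f ∈ L²(D) with 0 ≤ f ≤ 1 and f not identically zero, u = Gf the solution of -u'' = f with zero boundary values, ψ(x) = (1/2)(1-x²), and h = u/ψ (extended continuously to the boundary). Let a = inf{x > -1 : ∫_{-1}^{x} f dm > 0}. Then for each y ∈ [-1, a], h(y) = (1/(1-y)) ∫_D (1-x) f(x) dx. -/
open MeasureTheory Set

noncomputable def greenK (x y : ℝ) : ℝ :=
  if x ≤ y then (1/2) * (1 - y) * (1 + x) else (1/2) * (1 + y) * (1 - x)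

theorem stmt_8 (f u v h : ℝ → ℝ) (hmeas : Measurable f)
    (hf0 : ∀ x ∈ Set.Ioo (-1 : ℝ) 1, 0 ≤ f x ∧ f x ≤ 1)
    (hfne : ¬ (∀ᵐ x ∂(MeasureTheory.volume.restrict (Set.Ioo (-1 : ℝ) 1)), f x = 0))
    (hu : ∀ x, u x = ∫ y in Set.Ioo (-1 : ℝ) 1, greenK x y * f y)
    (hv : ∀ x ∈ Set.Icc (-1 : ℝ) 1, HasDerivAt u (v x) x)
    (hh : ∀ x, h x = if x = -1 then v (-1) else if x = 1 then -(v 1)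
          else u x / ((1/2) * (1 - x^2)))
    (a : ℝ) (ha : a = sInf {x : ℝ | -1 < x ∧ 0 < ∫ t in Set.Ioc (-1 : ℝ) x, f t}) :
    ∀ y ∈ Set.Icc (-1 : ℝ) a,
      h y = (1 / (1 - y)) * ∫ x in Set.Ioo (-1 : ℝ) 1, (1 - x) * f x := by
  set S : Set ℝ := {x : ℝ | -1 < x ∧ 0 < ∫ t in Set.Ioc (-1 : ℝ) x, f t} with hS
  have hbdd : BddBelow S := ⟨-1, fun x hx => hx.1.le⟩
  have hfae : ∀ᵐ y ∂(volume.restrict (Ioo (-1:ℝ) 1)), 0 ≤ f y ∧ f y ≤ 1 :=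
    (ae_restrict_iff' measurableSet_Ioo).2 (Filter.Eventually.of_forall hf0)
  have hint : IntegrableOn f (Ioo (-1:ℝ) 1) := by
    refine Integrable.mono' (integrable_const 1) hmeas.aestronglyMeasurable ?_
    filter_upwards [hfae] with y hy
    rw [Real.norm_eq_abs, abs_of_nonneg hy.1]; exact hy.2
  have hfnonneg : 0 ≤ᵐ[volume.restrict (Ioo (-1:ℝ) 1)] f := by
    filter_upwards [hfae] with y hy using hy.1
  have hfne' : ¬ (f =ᵐ[volume.restrict (Ioo (-1:ℝ) 1)] 0) := hfne
  have hpos : 0 < ∫ y in Ioo (-1:ℝ) 1, f y := by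
    rcases lt_or_eq_of_le (integral_nonneg_of_ae hfnonneg) with hlt | heq
    · exact hlt
    · exact absurd ((integral_eq_zero_iff_of_nonneg_ae hfnonneg hint).1 heq.symm) hfne'
  have h1S : (1:ℝ) ∈ S := by
    constructor
    · norm_num
    · rwa [integral_Ioc_eq_integral_Ioo]
  have hale1 : a ≤ 1 := ha ▸ csInf_le hbdd h1S
  -- f vanishes a.e. on Ioo (-1) a
  have hzero : ∀ᵐ y ∂(volume.restrict (Ioo (-1:ℝ) a)), f y = 0 := by
    rcases le_or_gt a (-1) with hle | hlt
    · rw [Ioo_eq_empty (by linarith), Measure.restrict_empty]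
      simp
    · have hU : Ioo (-1:ℝ) a = ⋃ q : {q : ℚ // -1 < (q:ℝ) ∧ (q:ℝ) < a}, Ioc (-1:ℝ) (q:ℝ) := by
        ext x
        simp only [mem_Ioo, mem_iUnion, mem_Ioc]
        constructor
        · rintro ⟨h1, h2⟩
          obtain ⟨q, hq1, hq2⟩ := exists_rat_btwn h2
          exact ⟨⟨q, lt_trans h1 hq1, hq2⟩, h1, le_of_lt hq1⟩
        · rintro ⟨⟨q, hq1, hq2⟩, h1, h2⟩
          exact ⟨h1, lt_of_le_of_lt h2 hq2⟩
      rw [hU, ae_restrict_iUnion_iff]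
      rintro ⟨q, hq1, hq2⟩
      have hnot : (q:ℝ) ∉ S := by
        intro hmem
        have : a ≤ (q:ℝ) := ha ▸ csInf_le hbdd hmem
        linarith
      have hsub : Ioc (-1:ℝ) (q:ℝ) ⊆ Ioo (-1:ℝ) 1 := fun x hx =>
        ⟨hx.1, lt_of_le_of_lt hx.2 (lt_of_lt_of_le hq2 hale1)⟩
      have hintq : IntegrableOn f (Ioc (-1:ℝ) (q:ℝ)) := hint.mono_set hsub
      have hnn : 0 ≤ᵐ[volume.restrict (Ioc (-1:ℝ) (q:ℝ))] f :=
        ae_restrict_of_ae_restrict_of_subset hsub hfnonneg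
      have h0 : ∫ t in Ioc (-1:ℝ) (q:ℝ), f t = 0 := by
        rcases lt_or_eq_of_le (integral_nonneg_of_ae hnn) with hlt' | heq'
        · exact absurd ⟨hq1, hlt'⟩ hnot
        · exact heq'.symm
      exact (integral_eq_zero_iff_of_nonneg_ae hnn hintq).1 h0
  have halt1 : a < 1 := by
    rcases lt_or_eq_of_le hale1 with hlt | heq
    · exact hlt
    · exfalso
      apply hfne'
      have hset : Ioo (-1:ℝ) a = Ioo (-1:ℝ) 1 := by rw [heq]
      rw [← hset]
      exact hzero
  set C := ∫ x in Ioo (-1:ℝ) 1, (1 - x) * f x with hCdef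
  have hzero' : ∀ᵐ y ∂(volume : Measure ℝ), y ∈ Ioo (-1:ℝ) a → f y = 0 :=
    (ae_restrict_iff' measurableSet_Ioo).1 hzero
  have huf : ∀ x : ℝ, x ≤ a → u x = (1/2) * (1 + x) * C := by
    intro x hx
    rw [hu x]
    have heq : ∫ y in Ioo (-1:ℝ) 1, greenK x y * f y
        = ∫ y in Ioo (-1:ℝ) 1, (1/2) * (1 + x) * ((1 - y) * f y) := by
      apply integral_congr_ae
      filter_upwards [ae_restrict_of_ae hzero', ae_restrict_mem measurableSet_Ioo]
        with y hy hymem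
      by_cases hxy : x ≤ y
      · unfold greenK; rw [if_pos hxy]; ring
      · push_neg at hxy
        have hf0y : f y = 0 := hy ⟨hymem.1, lt_of_lt_of_le hxy hx⟩
        simp [hf0y]
    rw [heq, integral_const_mul]
  intro y hy
  obtain ⟨hy1, hy2⟩ := hy
  have hane : -1 ≤ a := le_trans hy1 hy2
  have hylt : y < 1 := lt_of_le_of_lt hy2 halt1
  rw [hh y]
  by_cases hy0 : y = -1
  · rw [if_pos hy0]
    have hg : HasDerivAt (fun x : ℝ => (1/2) * (1 + x) * C) ((1/2)*C) (-1) := by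
      have h1 : HasDerivAt (fun x : ℝ => (1/2) * (1 + x) * C) ((1/2)*(0+1)*C) (-1) :=
        (((hasDerivAt_const (-1:ℝ) (1:ℝ)).add (hasDerivAt_id (-1:ℝ))).const_mul
          ((1:ℝ)/2)).mul_const C
      simpa using h1
    have hud : HasDerivWithinAt u ((1/2)*C) (Iic a) (-1) := by
      refine hg.hasDerivWithinAt.congr (fun z hz => huf z hz) (huf (-1) hane)
    have hv1 : HasDerivWithinAt u (v (-1)) (Iic a) (-1) :=
      (hv (-1) ⟨le_refl _, by norm_num⟩).hasDerivWithinAt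
    have hveq : v (-1) = (1/2)*C :=
      (uniqueDiffOn_Iic a (-1) (mem_Iic.2 hane)).eq_deriv _ hv1 hud
    rw [hveq, hy0]
    norm_num
  · have hy1' : -1 < y := lt_of_le_of_ne hy1 (Ne.symm hy0)
    rw [if_neg hy0, if_neg (by intro hc; rw [hc] at hylt; exact lt_irrefl _ hylt)]
    rw [huf y hy2]
    have h1 : (1:ℝ) + y ≠ 0 := by linarith
    have h2 : (1:ℝ) - y ≠ 0 := by linarith
    have h3 : (1:ℝ) - y^2 ≠ 0 := by
      intro hc
      have : (1 - y) * (1 + y) = 0 := by ring_nf; linarith [hc]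
      rcases mul_eq_zero.1 this with hh' | hh'
      · exact h2 hh'
      · exact h1 hh'
    field_simp
    ring
end

section
/- Let 0 < a₁ < b₁ < 1 and let u = G χ_{(a₁,b₁)} be the solution of -u'' = χ_{(a₁,b₁)} on D = (-1,1) with zero boundary values, and h = u/ψ with ψ(x) = (1/2)(1-x²). Then h(b₁) > h(a₁). Explicitly, h(a₁) = ((b₁-a₁)/(1-a₁))(1 - (a₁+b₁)/2) and h(b₁) = ((b₁-a₁)/(1+b₁))(1 + (a₁+b₁)/2), and the latter is strictly larger. -/
lemma integral_linear (a b c d : ℝ) :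
    ∫ y in a..b, (c + d * y) = c * (b - a) + d * (b^2 - a^2) / 2 := by
  rw [intervalIntegral.integral_add intervalIntegrable_const
    ((intervalIntegral.intervalIntegrable_id).const_mul d),
    intervalIntegral.integral_const, intervalIntegral.integral_const_mul,
    integral_id]
  simp [smul_eq_mul]; ring

lemma u_eval (a₁ b₁ : ℝ) (ha : 0 < a₁) (hab : a₁ < b₁) (hb : b₁ < 1)
    (x : ℝ) (g : ℝ → ℝ)
    (hg : ∀ y ∈ Set.Ioo a₁ b₁, greenK x y = g y) :
    (∫ y in Set.Ioo (-1 : ℝ) 1, greenK x y * Set.indicator (Set.Ioo a₁ b₁) 1 y)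
      = ∫ y in Set.Ioo a₁ b₁, g y := by
  have hsub : Set.Ioo a₁ b₁ ⊆ Set.Ioo (-1 : ℝ) 1 :=
    Set.Ioo_subset_Ioo (by linarith) (by linarith)
  have h1 : ∀ y, greenK x y * Set.indicator (Set.Ioo a₁ b₁) 1 y
      = Set.indicator (Set.Ioo a₁ b₁) (fun y => greenK x y) y := by
    intro y
    by_cases hy : y ∈ Set.Ioo a₁ b₁ <;>
      simp [Set.indicator_of_mem, Set.indicator_of_notMem, hy]
  simp_rw [h1]
  rw [MeasureTheory.setIntegral_indicator measurableSet_Ioo,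
    Set.inter_eq_right.mpr hsub]
  exact MeasureTheory.setIntegral_congr_fun measurableSet_Ioo (fun y hy => hg y hy)

theorem stmt_10 (a₁ b₁ : ℝ) (ha : 0 < a₁) (hab : a₁ < b₁) (hb : b₁ < 1)
    (u h : ℝ → ℝ)
    (hu : ∀ x, u x = ∫ y in Set.Ioo (-1 : ℝ) 1,
            greenK x y * Set.indicator (Set.Ioo a₁ b₁) 1 y)
    (hh : ∀ x ∈ Set.Ioo (-1 : ℝ) 1, h x = u x / ((1/2) * (1 - x^2))) :
    h a₁ = ((b₁ - a₁) / (1 - a₁)) * (1 - (a₁ + b₁) / 2) ∧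
    h b₁ = ((b₁ - a₁) / (1 + b₁)) * (1 + (a₁ + b₁) / 2) ∧
    h a₁ < h b₁ := by
  have hma : a₁ ∈ Set.Ioo (-1 : ℝ) 1 := ⟨by linarith, by linarith⟩
  have hmb : b₁ ∈ Set.Ioo (-1 : ℝ) 1 := ⟨by linarith, by linarith⟩
  have hioo : ∀ (c d : ℝ), ∫ y in Set.Ioo a₁ b₁, (c + d * y)
      = c * (b₁ - a₁) + d * (b₁^2 - a₁^2) / 2 := by
    intro c d
    rw [← MeasureTheory.integral_Ioc_eq_integral_Ioo,
      ← intervalIntegral.integral_of_le hab.le]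
    exact integral_linear a₁ b₁ c d
  have hua : u a₁ = ((1/2)*(1+a₁)) * (b₁ - a₁) + (-((1/2)*(1+a₁))) * (b₁^2 - a₁^2) / 2 := by
    rw [hu, u_eval a₁ b₁ ha hab hb a₁
      (fun y => (1/2)*(1+a₁) + (-((1/2)*(1+a₁))) * y)
      (fun y hy => by rw [greenK, if_pos hy.1.le]; ring), hioo]
  have hub : u b₁ = ((1/2)*(1-b₁)) * (b₁ - a₁) + ((1/2)*(1-b₁)) * (b₁^2 - a₁^2) / 2 := by
    rw [hu, u_eval a₁ b₁ ha hab hb b₁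
      (fun y => (1/2)*(1-b₁) + ((1/2)*(1-b₁)) * y)
      (fun y hy => by rw [greenK, if_neg (not_le.mpr hy.2)]; ring), hioo]
  have hA : h a₁ = ((b₁ - a₁) / (1 - a₁)) * (1 - (a₁ + b₁) / 2) := by
    rw [hh a₁ hma, hua]
    have h1 : (0:ℝ) < 1 - a₁^2 := by nlinarith
    have h2 : (0:ℝ) < 1 - a₁ := by linarith
    field_simp
    ring
  have hB : h b₁ = ((b₁ - a₁) / (1 + b₁)) * (1 + (a₁ + b₁) / 2) := by
    rw [hh b₁ hmb, hub]
    have h1 : (0:ℝ) < 1 - b₁^2 := by nlinarith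
    have h2 : (0:ℝ) < 1 + b₁ := by linarith
    field_simp
    ring
  refine ⟨hA, hB, ?_⟩
  rw [hA, hB]
  rw [div_mul_eq_mul_div, div_mul_eq_mul_div,
    div_lt_div_iff₀ (by linarith) (by linarith)]
  nlinarith [sq_nonneg (b₁ - a₁), mul_pos (mul_pos (sub_pos.mpr hab) (by linarith : (0:ℝ) < a₁ + b₁)) (by linarith : (0:ℝ) < 2)]
end

section
/- Let D = (-1,1), G the Green operator of the Dirichlet Laplacian, ψ = Gχ_D, and for an open set A ⊆ D let f = (−(λ+1))χ_A + (1−λ)χ_{D∖A} for λ ∈ (-1,1), and u = Gf. If ∫_D u dm = 0, then (ψ, χ_A) = ((1−λ)/2)(ψ, 1), and ∫_{D∖A} u dm = 2(ψ,1)^{-1}[(ψ,1)(Gχ_A, χ_A) − (ψ, χ_A)²] = 2(Gχ_A,χ_A) − (1/3)(1−λ)². -/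
open Classical MeasureTheory

lemma greenK_def' (x y : ℝ) : greenK x y = (1/2) * (1 - max x y) * (1 + min x y) := by
  unfold greenK
  rcases le_or_gt x y with h | h
  · rw [if_pos h, max_eq_right h, min_eq_left h]
  · rw [if_neg (not_le.mpr h), max_eq_left h.le, min_eq_right h.le]; ring

lemma greenK_cont1 (x : ℝ) : Continuous fun y : ℝ => greenK x y := by
  simp only [greenK_def']; fun_prop

lemma poly_int (c a b : ℝ) : ∫ y in a..b, c * (1 + y) = c * ((b - a) + (b^2 - a^2)/2) := by
  rw [intervalIntegral.integral_const_mul]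
  congr 1
  rw [intervalIntegral.integral_add (intervalIntegrable_const) intervalIntegral.intervalIntegrable_id,
    intervalIntegral.integral_const, integral_id]
  simp

lemma poly_int2 (c a b : ℝ) : ∫ y in a..b, c * (1 - y) = c * ((b - a) - (b^2 - a^2)/2) := by
  rw [intervalIntegral.integral_const_mul]
  congr 1
  rw [intervalIntegral.integral_sub (intervalIntegrable_const) intervalIntegral.intervalIntegrable_id,
    intervalIntegral.integral_const, integral_id]
  simp

lemma psi_eq {x : ℝ} (hx : x ∈ Set.Icc (-1:ℝ) 1) :
    (∫ y in Set.Ioo (-1:ℝ) 1, greenK x y) = (1 - x^2)/2 := by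
  rw [← MeasureTheory.integral_Ioc_eq_integral_Ioo,
    ← intervalIntegral.integral_of_le (by norm_num : (-1:ℝ) ≤ 1),
    ← intervalIntegral.integral_add_adjacent_intervals (a := -1) (b := x) (c := 1)
      ((greenK_cont1 x).intervalIntegrable _ _) ((greenK_cont1 x).intervalIntegrable _ _)]
  have e1 : ∫ y in (-1:ℝ)..x, greenK x y = ∫ y in (-1:ℝ)..x, ((1/2)*(1-x)) * (1 + y) := by
    apply intervalIntegral.integral_congr
    intro y hy
    rw [Set.uIcc_of_le hx.1] at hy
    rw [greenK_def', max_eq_left hy.2, min_eq_right hy.2]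
  have e2 : ∫ y in x..(1:ℝ), greenK x y = ∫ y in x..(1:ℝ), ((1/2)*(1+x)) * (1 - y) := by
    apply intervalIntegral.integral_congr
    intro y hy
    rw [Set.uIcc_of_le hx.2] at hy
    rw [greenK_def', max_eq_right hy.1, min_eq_left hy.1]; ring
  rw [e1, e2, poly_int, poly_int2]; ring

lemma psi_total : (∫ x in Set.Ioo (-1:ℝ) 1, (1 - x^2)/2) = 2/3 := by
  rw [← MeasureTheory.integral_Ioc_eq_integral_Ioo,
    ← intervalIntegral.integral_of_le (by norm_num : (-1:ℝ) ≤ 1)]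
  have : ∀ y : ℝ, (1 - y^2)/2 = 1/2 - (1/2) * y^2 := by intro y; ring
  simp only [this]
  rw [intervalIntegral.integral_sub intervalIntegrable_const (((by fun_prop : Continuous fun y : ℝ => (1/2:ℝ) * y^2).intervalIntegrable _ _)),
    intervalIntegral.integral_const,
    intervalIntegral.integral_const_mul, integral_pow]
  norm_num

lemma greenK_symm (x y : ℝ) : greenK x y = greenK y x := by
  rw [greenK_def', greenK_def', max_comm, min_comm]

lemma greenK_cont : Continuous fun p : ℝ × ℝ => greenK p.1 p.2 := by
  simp only [greenK_def']; fun_prop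

lemma greenK_bound {x y : ℝ} (hx : x ∈ Set.Icc (-1:ℝ) 1) (hy : y ∈ Set.Icc (-1:ℝ) 1) :
    |greenK x y| ≤ 2 := by
  rw [greenK_def']
  have h1 : max x y ≤ 1 := max_le hx.2 hy.2
  have h2 : -1 ≤ max x y := le_trans hx.1 (le_max_left x y)
  have h3 : -1 ≤ min x y := le_min hx.1 hy.1
  have h4 : min x y ≤ 1 := le_trans (min_le_left x y) hx.2
  rw [abs_le]; constructor <;> nlinarith

theorem stmt_19 (A : Set ℝ) (hA : IsOpen A) (hAD : A ⊆ Set.Ioo (-1 : ℝ) 1)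
    (l : ℝ) (hl : l ∈ Set.Ioo (-1 : ℝ) 1) (f u : ℝ → ℝ)
    (hf : ∀ x ∈ Set.Ioo (-1 : ℝ) 1, f x = if x ∈ A then -(l + 1) else 1 - l)
    (hu : ∀ x, u x = ∫ y in Set.Ioo (-1 : ℝ) 1, greenK x y * f y)
    (hflux : (∫ x in Set.Ioo (-1 : ℝ) 1, u x) = 0) :
    (∫ x in A, (1/2) * (1 - x^2)) = ((1 - l) / 2) * (2/3) ∧
    (∫ x in Set.Ioo (-1 : ℝ) 1 \ A, u x) =
      2 * (2/3 : ℝ)⁻¹ * ((2/3) * (∫ x in A, ∫ y in A, greenK x y)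
        - (∫ x in A, (1/2) * (1 - x^2))^2) ∧
    (∫ x in Set.Ioo (-1 : ℝ) 1 \ A, u x) =
      2 * (∫ x in A, ∫ y in A, greenK x y) - (1/3) * (1 - l)^2 := by
  have hAm : MeasurableSet A := hA.measurableSet
  set D : Set ℝ := Set.Ioo (-1:ℝ) 1 with hD
  have hDm : MeasurableSet D := measurableSet_Ioo
  haveI : IsFiniteMeasure (volume.restrict D) :=
    ⟨by rw [Measure.restrict_apply_univ]; exact measure_Ioo_lt_top⟩
  have hDA : D ∩ A = A := Set.inter_eq_self_of_subset_right hAD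
  have hKint : ∀ x : ℝ, IntegrableOn (fun y => greenK x y) D := fun x =>
    ((greenK_cont1 x).integrableOn_Icc (a := -1) (b := 1)).mono_set Set.Ioo_subset_Icc_self
  set F : ℝ × ℝ → ℝ := fun p => greenK p.1 p.2 * A.indicator (fun _ => (1:ℝ)) p.2 with hF
  set P : Measure (ℝ × ℝ) := (volume.restrict D).prod (volume.restrict D) with hP
  have hFmeas : Measurable F :=
    greenK_cont.measurable.mul ((measurable_const.indicator hAm).comp measurable_snd)
  have hFint : Integrable F P := by
    apply Integrable.mono' (integrable_const (2:ℝ)) hFmeas.aestronglyMeasurable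
    rw [hP, Measure.prod_restrict]
    filter_upwards [ae_restrict_mem (hDm.prod hDm)] with p hp
    obtain ⟨hp1, hp2⟩ := hp
    have hb := greenK_bound (Set.Ioo_subset_Icc_self hp1) (Set.Ioo_subset_Icc_self hp2)
    rw [hF]
    simp only [Real.norm_eq_abs, abs_mul]
    by_cases hmem : p.2 ∈ A
    · simp only [Set.indicator_of_mem hmem]
      simpa using hb
    · simp [Set.indicator_of_notMem hmem]
  have hind : ∀ (x y : ℝ), greenK x y * A.indicator (fun _ => (1:ℝ)) y
      = A.indicator (fun y => greenK x y) y := by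
    intro x y; by_cases hy : y ∈ A <;> simp [hy]
  have hgA : ∀ x : ℝ, (∫ y, F (x, y) ∂(volume.restrict D)) = ∫ y in A, greenK x y := by
    intro x
    simp only [hF, hind]
    rw [setIntegral_indicator hAm, hDA]
  -- integrability of gA on D
  have hgAint : IntegrableOn (fun x => ∫ y in A, greenK x y) D := by
    have h := hFint.integral_prod_left
    have heq : (fun x => ∫ y, F (x, y) ∂(volume.restrict D))
        = fun x => ∫ y in A, greenK x y := funext hgA
    rw [heq] at h
    exact h
  -- indicator integrand integrable on D
  have hKAint : ∀ x : ℝ, IntegrableOn (fun y => greenK x y * A.indicator (fun _ => (1:ℝ)) y) D := by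
    intro x
    have : IntegrableOn (A.indicator (fun y => greenK x y)) D :=
      (hKint x).indicator hAm
    exact this.congr (Filter.Eventually.of_forall fun y => (hind x y).symm)
  -- pointwise formula for u on D
  have hU : ∀ x ∈ D, u x = (1 - l) * ((1 - x^2)/2) - 2 * ∫ y in A, greenK x y := by
    intro x hx
    rw [hu x]
    have e1 : ∀ y ∈ D, greenK x y * f y
        = (1 - l) * greenK x y - 2 * (greenK x y * A.indicator (fun _ => (1:ℝ)) y) := by
      intro y hy
      rw [hf y hy]
      by_cases hmem : y ∈ A
      · simp only [if_pos hmem, Set.indicator_of_mem hmem]; ring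
      · simp only [if_neg hmem, Set.indicator_of_notMem hmem]; ring
    rw [setIntegral_congr_fun hDm e1,
      integral_sub ((hKint x).const_mul _) ((hKAint x).const_mul _),
      integral_const_mul, integral_const_mul]
    have e2 : (∫ y in D, greenK x y * A.indicator (fun _ => (1:ℝ)) y) = ∫ y in A, greenK x y := by
      simp only [hind]
      rw [setIntegral_indicator hAm, hDA]
    rw [e2, psi_eq (Set.Ioo_subset_Icc_self hx)]
  -- the nice function
  have hψint : IntegrableOn (fun x : ℝ => (1 - x^2)/2) D := by
    have hc : Continuous fun x : ℝ => (1 - x^2)/2 := by fun_prop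
    exact (hc.integrableOn_Icc (a := -1) (b := 1)).mono_set Set.Ioo_subset_Icc_self
  set φ : ℝ → ℝ := fun x => (1 - l) * ((1 - x^2)/2) - 2 * ∫ y in A, greenK x y with hφ
  have hφint : IntegrableOn φ D :=
    (hψint.const_mul (1 - l)).sub (hgAint.const_mul 2)
  have huint : IntegrableOn u D := by
    apply hφint.congr_fun (fun x hx => (hU x hx).symm) hDm
  -- Fubini: ∫_D gA = ∫_A ψ
  have hswap : (∫ x in D, ∫ y in A, greenK x y) = ∫ y in A, (1 - y^2)/2 := by
    have h1 : (∫ x in D, ∫ y in A, greenK x y)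
        = ∫ x, (∫ y, F (x, y) ∂(volume.restrict D)) ∂(volume.restrict D) := by
      refine setIntegral_congr_fun hDm fun x _ => (hgA x).symm
    rw [h1, integral_integral_swap hFint]
    have h2 : ∀ y ∈ D, (∫ x, F (x, y) ∂(volume.restrict D))
        = ((1 - y^2)/2) * A.indicator (fun _ => (1:ℝ)) y := by
      intro y hy
      rw [hF]
      simp only
      rw [integral_mul_const]
      congr 1
      have : (fun x => greenK x y) = fun x => greenK y x := funext fun x => greenK_symm x y
      rw [this, psi_eq (Set.Ioo_subset_Icc_self hy)]
    rw [setIntegral_congr_fun hDm h2]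
    have : ∀ y : ℝ, ((1 - y^2)/2) * A.indicator (fun _ => (1:ℝ)) y
        = A.indicator (fun y => (1 - y^2)/2) y := by
      intro y; by_cases hy : y ∈ A <;> simp [hy]
    simp only [this]
    rw [setIntegral_indicator hAm, hDA]
  -- flux
  set S : ℝ := ∫ y in A, (1 - y^2)/2 with hS
  have hfluxφ : (1 - l) * (2/3) - 2 * S = 0 := by
    rw [← hflux, setIntegral_congr_fun hDm hU]
    rw [integral_sub (hψint.const_mul _) (hgAint.const_mul _),
      integral_const_mul, integral_const_mul, psi_total, hswap]
  have hSval : S = (1 - l)/3 := by linarith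
  -- first claim
  have claim1 : (∫ x in A, (1/2) * (1 - x^2)) = S := by
    refine setIntegral_congr_fun hAm fun x _ => by ring
  -- ∫_A u
  have hAu : (∫ x in A, u x) = (1 - l) * S - 2 * ∫ x in A, ∫ y in A, greenK x y := by
    rw [setIntegral_congr_fun hAm fun x hx => hU x (hAD hx)]
    rw [integral_sub ((hψint.mono_set hAD).const_mul _) ((hgAint.mono_set hAD).const_mul _),
      integral_const_mul, integral_const_mul]
  have hdiff : (∫ x in D \ A, u x) = (∫ x in D, u x) - ∫ x in A, u x :=
    integral_diff hAm huint hAD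
  set Q : ℝ := ∫ x in A, ∫ y in A, greenK x y with hQ
  have hDAu : (∫ x in D \ A, u x) = 2 * Q - (1/3) * (1 - l)^2 := by
    rw [hdiff, hflux, hAu, hSval]; ring
  refine ⟨by rw [claim1, hSval]; ring, ?_, by rw [hDAu]⟩
  rw [hDAu, claim1, hSval]; ring
end
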